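/- arXiv:1108.2228 — 5 statements merged into one kernel-verified Lean document; each statement's English description precedes it below -/
import Mathlib

section
/- Let Q ∈ [0,1]^{n×n} be a fixed matrix and let A ∈ {0,1}^{n×n} be a random matrix whose entries are independent with A_{uv} Bernoulli(Q_{uv}). Then for each pair u ≠ v, the probability that (AAᵀ_{uv} − QQᵀ_{uv})² ≥ 2(n−2)log n + 2n + 4 is at most 2n^{−4}. -/
open MeasureTheory ProbabilityTheory Matrix

open Real in
/-- Hoeffding's lemma for centered Bernoulli. -/
lemma bern_mgf (p : ℝ) (hp0 : 0 ≤ p) (hp1 : p ≤ 1) (t : ℝ) :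
    (1 - p) * exp (-(t * p)) + p * exp (t * (1 - p)) ≤ exp (t ^ 2 / 8) := by
  set D : ℝ → ℝ := fun x => 1 - p + p * exp x with hDdef
  have hD : ∀ x, 0 < D x := by
    intro x
    rcases hp1.lt_or_eq with h | h
    · have := exp_pos x; simp only [hDdef]; nlinarith
    · subst h; simpa [hDdef] using exp_pos x
  set q : ℝ → ℝ := fun x => p * exp x / D x with hqdef
  have hDd : ∀ x, HasDerivAt D (p * exp x) x := by
    intro x
    exact ((Real.hasDerivAt_exp x).const_mul p).const_add (1 - p)
  have hqd : ∀ x, HasDerivAt q (q x * (1 - q x)) x := by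
    intro x
    have h := (((Real.hasDerivAt_exp x).const_mul p)).div (hDd x) (hD x).ne'
    refine h.congr_deriv ?_
    have hDx := (hD x).ne'
    simp only [hqdef, hDdef] at hDx ⊢
    field_simp [hDx]
  set g1 : ℝ → ℝ := fun x => q x - p - x / 4 with hg1def
  have hg1d : ∀ x, HasDerivAt g1 (q x * (1 - q x) - 1 / 4) x := by
    intro x
    exact ((hqd x).sub_const p).sub ((hasDerivAt_id x).div_const 4)
  have hg1anti : Antitone g1 := by
    apply antitone_of_deriv_nonpos
    · intro x; exact (hg1d x).differentiableAt
    · intro x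
      rw [(hg1d x).deriv]
      nlinarith [sq_nonneg (2 * q x - 1)]
  have hq0 : q 0 = p := by simp [hqdef, hDdef]
  have hg10 : g1 0 = 0 := by simp [hg1def, hq0]
  set g : ℝ → ℝ := fun x => Real.log (D x) - p * x - x ^ 2 / 8 with hgdef
  have hgd : ∀ x, HasDerivAt g (g1 x) x := by
    intro x
    have h1 : HasDerivAt (fun x => Real.log (D x)) (p * exp x / D x) x :=
      (hDd x).log (hD x).ne'
    have h2 : HasDerivAt g (p * exp x / D x - p - 2 * x / 8) x := by
      refine (h1.sub ?_).sub ?_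
      · simpa using (hasDerivAt_id x).const_mul p
      · simpa using ((hasDerivAt_pow 2 x).div_const 8)
    convert h2 using 1
    simp only [hg1def, hqdef]
    ring
  have hg0 : g 0 = 0 := by simp [hgdef, hDdef]
  have hgle : ∀ x, g x ≤ 0 := by
    intro x
    rcases le_total 0 x with hx | hx
    · have : AntitoneOn g (Set.Ici 0) := by
        apply antitoneOn_of_deriv_nonpos (convex_Ici 0)
        · exact fun y _ => ((hgd y).differentiableAt).continuousAt.continuousWithinAt
        · exact fun y _ => ((hgd y).differentiableAt).differentiableWithinAt
        · intro y hy
          rw [(hgd y).deriv]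
          calc g1 y ≤ g1 0 := hg1anti (le_of_lt (by simpa using hy))
          _ = 0 := hg10
      calc g x ≤ g 0 := this (by simp) (by simpa using hx) hx
      _ = 0 := hg0
    · have : MonotoneOn g (Set.Iic 0) := by
        apply monotoneOn_of_deriv_nonneg (convex_Iic 0)
        · exact fun y _ => ((hgd y).differentiableAt).continuousAt.continuousWithinAt
        · exact fun y _ => ((hgd y).differentiableAt).differentiableWithinAt
        · intro y hy
          have : (0:ℝ) ≤ g1 y := hg10 ▸ hg1anti (le_of_lt (by simpa using hy))
          rw [(hgd y).deriv]; exact this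
      calc g x ≤ g 0 := this (by simpa using hx) (by simp) hx
      _ = 0 := hg0
  have hgt := hgle t
  have hlog : Real.log (D t) ≤ p * t + t ^ 2 / 8 := by
    simp only [hgdef] at hgt; linarith
  have hDle : D t ≤ exp (p * t + t ^ 2 / 8) := by
    rw [← Real.exp_log (hD t)]; exact exp_le_exp.2 hlog
  have key : (1 - p) * exp (-(t * p)) + p * exp (t * (1 - p)) = exp (-(t * p)) * D t := by
    simp only [hDdef]
    rw [show t * (1 - p) = t + -(t * p) by ring, Real.exp_add]
    ring
  rw [key]
  calc exp (-(t * p)) * D t ≤ exp (-(t * p)) * exp (p * t + t ^ 2 / 8) := by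
        exact mul_le_mul_of_nonneg_left hDle (exp_nonneg _)
  _ = exp (t ^ 2 / 8) := by rw [← Real.exp_add]; ring_nf

open Real in
lemma bern_integral_mgf {Ω : Type*} [MeasurableSpace Ω] (μ : Measure Ω)
    [IsProbabilityMeasure μ] (Y : Ω → ℝ) (hm : Measurable Y)
    (h01 : ∀ ω, Y ω = 0 ∨ Y ω = 1) (p : ℝ) (hp0 : 0 ≤ p) (hp1 : p ≤ 1)
    (hp : μ {ω | Y ω = 1} = ENNReal.ofReal p) (t : ℝ) :
    mgf (fun ω => Y ω - p) μ t ≤ exp (t ^ 2 / 8) := by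
  have hE : MeasurableSet {ω | Y ω = 1} := hm (measurableSet_singleton 1)
  have hYind : Y = Set.indicator {ω | Y ω = 1} (fun _ => (1 : ℝ)) := by
    funext ω
    rcases h01 ω with h | h <;> simp [Set.indicator_apply, h]
  have hYint : Integrable Y μ := by
    rw [hYind]; exact (integrable_const (1 : ℝ)).indicator hE
  have hIY : ∫ ω, Y ω ∂μ = p := by
    rw [hYind, integral_indicator_const _ hE, measureReal_def, hp, smul_eq_mul, mul_one,
      ENNReal.toReal_ofReal hp0]
  have hpt : ∀ ω, exp (t * (Y ω - p)) =
      exp (-(t * p)) + (exp (t * (1 - p)) - exp (-(t * p))) * Y ω := by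
    intro ω
    rcases h01 ω with h | h <;> rw [h] <;> ring_nf
  have : mgf (fun ω => Y ω - p) μ t =
      (1 - p) * exp (-(t * p)) + p * exp (t * (1 - p)) := by
    rw [mgf]
    simp only [hpt]
    rw [integral_add (integrable_const _) (hYint.const_mul _),
      integral_const, integral_const_mul, hIY]
    simp [measure_univ]
    ring
  rw [this]
  exact bern_mgf p hp0 hp1 t

open Real in
/-- For a random 0-1 matrix `A` with independent Bernoulli entries of mean
matrix `Q ∈ [0,1]^{n×n}`, for each `u ≠ v`,
`P[(AAᵀ_{uv} − QQᵀ_{uv})² ≥ 2(n−2)log n + 2n + 4] ≤ 2 n⁻⁴`. -/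
theorem stmt0 (n : ℕ) (Q : Matrix (Fin n) (Fin n) ℝ)
    (hQ : ∀ u v, Q u v ∈ Set.Icc (0 : ℝ) 1)
    {Ω : Type*} [MeasurableSpace Ω] (μ : Measure Ω) [IsProbabilityMeasure μ]
    (A : Ω → Matrix (Fin n) (Fin n) ℝ)
    (hmeas : ∀ u v, Measurable (fun ω => A ω u v))
    (h01 : ∀ ω u v, A ω u v = 0 ∨ A ω u v = 1)
    (hber : ∀ u v, μ {ω | A ω u v = 1} = ENNReal.ofReal (Q u v))
    (hind : iIndepFun
      (fun (p : Fin n × Fin n) ω => A ω p.1 p.2) μ)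
    (u v : Fin n) (huv : u ≠ v) :
    μ {ω | 2 * ((n : ℝ) - 2) * Real.log n + 2 * n + 4 ≤
        ((A ω * (A ω)ᵀ) u v - (Q * Qᵀ) u v) ^ 2}
      ≤ ENNReal.ofReal (2 / (n : ℝ) ^ 4) := by
  classical
  have hn : 0 < n := u.pos
  have hn1 : (1 : ℝ) ≤ n := by exact_mod_cast hn
  set X : Fin n → Ω → ℝ := fun w ω => A ω u w * A ω v w - Q u w * Q v w with hXdef
  set S : Ω → ℝ := fun ω => ∑ w, X w ω with hSdef
  have hmX : ∀ w, Measurable (X w) := fun w =>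
    ((hmeas u w).mul (hmeas v w)).sub measurable_const
  have hmS : Measurable S := Finset.measurable_sum _ fun w _ => hmX w
  have hXbd : ∀ w ω, |X w ω| ≤ 1 := by
    intro w ω
    have h1 := (hQ u w).1; have h2 := (hQ u w).2
    have h3 := (hQ v w).1; have h4 := (hQ v w).2
    rcases h01 ω u w with h | h <;> rcases h01 ω v w with h' | h' <;>
      rw [abs_le] <;> simp only [hXdef, h, h'] <;> constructor <;> nlinarith
  have hSbd : ∀ ω, |S ω| ≤ n := by
    intro ω
    calc |S ω| ≤ ∑ w, |X w ω| := Finset.abs_sum_le_sum_abs _ _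
    _ ≤ ∑ _w : Fin n, (1 : ℝ) := Finset.sum_le_sum fun w _ => hXbd w ω
    _ = n := by simp
  -- integrability of exp(t * X-type bounded functions)
  have hint : ∀ (t : ℝ) (f : Ω → ℝ) (_ : Measurable f) (C : ℝ) (_ : ∀ ω, |f ω| ≤ C),
      Integrable (fun ω => exp (t * f ω)) μ := by
    intro t f hf C hC
    refine Integrable.mono' (integrable_const (exp (|t| * C))) ?_ ?_
    · exact (hf.const_mul t).exp.aestronglyMeasurable
    · refine ae_of_all _ fun ω => ?_
      rw [Real.norm_eq_abs, abs_exp, exp_le_exp]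
      calc t * f ω ≤ |t * f ω| := le_abs_self _
      _ = |t| * |f ω| := abs_mul _ _
      _ ≤ |t| * C := by
          exact mul_le_mul_of_nonneg_left (hC ω) (abs_nonneg t)
  -- per-coordinate mgf bound
  have hmgfX : ∀ (w : Fin n) (t : ℝ), mgf (X w) μ t ≤ exp (t ^ 2 / 8) := by
    intro w t
    have hY01 : ∀ ω, A ω u w * A ω v w = 0 ∨ A ω u w * A ω v w = 1 := by
      intro ω
      rcases h01 ω u w with h | h <;> rcases h01 ω v w with h' | h' <;> simp [h, h']
    have hμ : μ {ω | A ω u w * A ω v w = 1} = ENNReal.ofReal (Q u w * Q v w) := by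
      have hne : (u, w) ≠ (v, w) := fun h => huv (congrArg Prod.fst h)
      have hIF : IndepFun (fun ω => A ω u w) (fun ω => A ω v w) μ :=
        hind.indepFun hne
      have hset : {ω | A ω u w * A ω v w = 1} =
          (fun ω => A ω u w) ⁻¹' {1} ∩ (fun ω => A ω v w) ⁻¹' {1} := by
        ext ω
        rcases h01 ω u w with h | h <;> rcases h01 ω v w with h' | h' <;>
          simp [h, h']
      rw [hset, hIF.measure_inter_preimage_eq_mul _ _ (measurableSet_singleton 1)
        (measurableSet_singleton 1)]
      have : ((fun ω => A ω u w) ⁻¹' {1}) = {ω | A ω u w = 1} := rfl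
      have h2 : ((fun ω => A ω v w) ⁻¹' {1}) = {ω | A ω v w = 1} := rfl
      rw [this, h2, hber u w, hber v w, ← ENNReal.ofReal_mul (hQ u w).1]
    exact bern_integral_mgf μ _ ((hmeas u w).mul (hmeas v w)) hY01 _
      (mul_nonneg (hQ u w).1 (hQ v w).1)
      (mul_le_one₀ (hQ u w).2 (hQ v w).1 (hQ v w).2) hμ t
  -- independence of X a from the partial sums
  have hmf : ∀ p : Fin n × Fin n, Measurable ((fun (p : Fin n × Fin n) ω => A ω p.1 p.2) p) :=
    fun p => hmeas p.1 p.2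
  have hindepsum : ∀ (a : Fin n) (s : Finset (Fin n)), a ∉ s →
      IndepFun (X a) (fun ω => ∑ w ∈ s, X w ω) μ := by
    intro a s ha
    set T₁ : Finset (Fin n × Fin n) := {(u, a), (v, a)} with hT₁
    set T₂ : Finset (Fin n × Fin n) :=
      s.image (fun w => (u, w)) ∪ s.image (fun w => (v, w)) with hT₂
    have hdisj : Disjoint T₁ T₂ := by
      rw [Finset.disjoint_left]
      intro p hp1 hp2
      simp only [hT₁, Finset.mem_insert, Finset.mem_singleton] at hp1
      simp only [hT₂, Finset.mem_union, Finset.mem_image] at hp2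
      have h2 : p.2 ∈ s := by
        rcases hp2 with ⟨w, hw, rfl⟩ | ⟨w, hw, rfl⟩ <;> simpa using hw
      have h1 : p.2 = a := by rcases hp1 with rfl | rfl <;> rfl
      exact ha (h1 ▸ h2)
    have hmem1 : (u, a) ∈ T₁ := by simp [hT₁]
    have hmem2 : (v, a) ∈ T₁ := by simp [hT₁]
    have hmemu : ∀ w : Fin n, w ∈ s → (u, w) ∈ T₂ := by
      intro w hw; simp only [hT₂, Finset.mem_union, Finset.mem_image]
      exact Or.inl ⟨w, hw, rfl⟩
    have hmemv : ∀ w : Fin n, w ∈ s → (v, w) ∈ T₂ := by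
      intro w hw; simp only [hT₂, Finset.mem_union, Finset.mem_image]
      exact Or.inr ⟨w, hw, rfl⟩
    have hbase := hind.indepFun_finset T₁ T₂ hdisj hmf
    set φ₁ : (∀ _i : T₁, ℝ) → ℝ :=
      fun g => g ⟨(u, a), hmem1⟩ * g ⟨(v, a), hmem2⟩ - Q u a * Q v a with hφ₁
    set φ₂ : (∀ _i : T₂, ℝ) → ℝ := fun g =>
      ∑ w ∈ s.attach,
        (g ⟨(u, w.1), hmemu w.1 w.2⟩ * g ⟨(v, w.1), hmemv w.1 w.2⟩ -
          Q u w.1 * Q v w.1) with hφ₂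
    have hφ₁m : Measurable φ₁ :=
      ((measurable_pi_apply (⟨(u, a), hmem1⟩ : T₁)).mul
        (measurable_pi_apply (⟨(v, a), hmem2⟩ : T₁))).sub measurable_const
    have hφ₂m : Measurable φ₂ :=
      Finset.measurable_sum _ fun w _ =>
        ((measurable_pi_apply (⟨(u, w.1), hmemu w.1 w.2⟩ : T₂)).mul
          (measurable_pi_apply (⟨(v, w.1), hmemv w.1 w.2⟩ : T₂))).sub measurable_const
    have hcomp := hbase.comp hφ₁m hφ₂m
    have e1 : (φ₁ ∘ fun ω (i : T₁) => A ω (i : Fin n × Fin n).1 (i : Fin n × Fin n).2)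
        = X a := rfl
    have e2 : (φ₂ ∘ fun ω (i : T₂) => A ω (i : Fin n × Fin n).1 (i : Fin n × Fin n).2)
        = fun ω => ∑ w ∈ s, X w ω := by
      funext ω
      simp only [Function.comp, hφ₂]
      rw [← Finset.sum_attach s (fun w => X w ω)]
    rw [← e1, ← e2]
    exact hcomp
  -- mgf of partial sums
  have key : ∀ t : ℝ, ∀ s : Finset (Fin n),
      mgf (fun ω => ∑ w ∈ s, X w ω) μ t ≤ exp (s.card * t ^ 2 / 8) := by
    intro t s
    induction s using Finset.induction_on with
    | empty => simp [mgf, measure_univ]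
    | insert a s ha ih =>
      have heq : (fun ω => ∑ w ∈ insert a s, X w ω)
          = X a + fun ω => ∑ w ∈ s, X w ω := by
        funext ω; simp [Finset.sum_insert ha]
      have hX1 : AEStronglyMeasurable (fun ω => exp (t * X a ω)) μ :=
        ((hmX a).const_mul t).exp.aestronglyMeasurable
      have hX2 : AEStronglyMeasurable (fun ω => exp (t * ∑ w ∈ s, X w ω)) μ :=
        (((Finset.measurable_sum _ fun w _ => hmX w).const_mul t).exp).aestronglyMeasurable
      rw [heq, (hindepsum a s ha).mgf_add hX1 hX2]
      calc mgf (X a) μ t * mgf (fun ω => ∑ w ∈ s, X w ω) μ t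
          ≤ exp (t ^ 2 / 8) * exp (s.card * t ^ 2 / 8) :=
            mul_le_mul (hmgfX a t) ih mgf_nonneg (exp_nonneg _)
      _ = exp ((insert a s).card * t ^ 2 / 8) := by
          rw [← Real.exp_add, Finset.card_insert_of_notMem ha]
          push_cast; ring_nf
  have hmgfS : ∀ t : ℝ, mgf S μ t ≤ exp (n * t ^ 2 / 8) := by
    intro t
    have := key t Finset.univ
    simpa [hSdef] using this
  -- numeric setup
  set c : ℝ := 2 * ((n : ℝ) - 2) * Real.log n + 2 * n + 4 with hcdef
  have hnR : (0:ℝ) < n := by positivity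
  have hlogn : 0 ≤ Real.log n := Real.log_nonneg hn1
  have hlog_le : Real.log n ≤ (n : ℝ) / 2 + 1 := by
    have hs : Real.sqrt n ^ 2 = (n:ℝ) := Real.sq_sqrt hnR.le
    have h1 : Real.log (Real.sqrt n) ≤ Real.sqrt n - 1 :=
      Real.log_le_sub_one_of_pos (Real.sqrt_pos.2 hnR)
    have h2 : Real.log n = 2 * Real.log (Real.sqrt n) := by
      rw [Real.log_sqrt hnR.le]; ring
    nlinarith [Real.sqrt_nonneg (n:ℝ), sq_nonneg (Real.sqrt n - 2)]
  have hc : 0 < c := by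
    have h3 := Real.log_le_sub_one_of_pos hnR
    simp only [hcdef]; nlinarith
  set r := Real.sqrt c with hrdef
  have hr2 : r ^ 2 = c := Real.sq_sqrt hc.le
  have hrpos : 0 < r := Real.sqrt_pos.2 hc
  set t0 : ℝ := 4 * r / n with ht0
  have ht0pos : 0 ≤ t0 := by positivity
  have hexp1 : -t0 * r + (n:ℝ) * t0 ^ 2 / 8 = -(2 * c / n) := by
    have h : -t0 * r + (n:ℝ) * t0 ^ 2 / 8 = -(2 * r ^ 2 / n) := by
      rw [ht0]; field_simp; ring
    rw [h, hr2]
  have hfinal : exp (-(2 * c / n)) ≤ 1 / (n:ℝ) ^ 4 := by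
    have hcge : 2 * (n:ℝ) * Real.log n ≤ c := by
      simp only [hcdef]; nlinarith
    have hmono : exp (-(2 * c / n)) ≤ exp (-(4 * Real.log n)) := by
      apply exp_le_exp.2
      rw [neg_le_neg_iff, le_div_iff₀ hnR]
      nlinarith
    refine hmono.trans ?_
    rw [Real.exp_neg]
    have h4 : exp (4 * Real.log n) = (n:ℝ) ^ 4 := by
      rw [show (4:ℝ) * Real.log n = ((4:ℕ):ℝ) * Real.log n by norm_num,
        Real.exp_nat_mul, Real.exp_log hnR]
    rw [h4, one_div]
  -- upper tail
  have hup : (μ {ω | r ≤ S ω}).toReal ≤ 1 / (n:ℝ) ^ 4 := by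
    have h1 := measure_ge_le_exp_mul_mgf (μ := μ) (X := S) r ht0pos
      (hint t0 S hmS n hSbd)
    refine h1.trans ?_
    calc exp (-t0 * r) * mgf S μ t0
        ≤ exp (-t0 * r) * exp ((n:ℝ) * t0 ^ 2 / 8) :=
          mul_le_mul_of_nonneg_left (hmgfS t0) (exp_nonneg _)
    _ = exp (-(2 * c / n)) := by rw [← Real.exp_add, hexp1]
    _ ≤ 1 / (n:ℝ) ^ 4 := hfinal
  -- lower tail
  have hdown : (μ {ω | S ω ≤ -r}).toReal ≤ 1 / (n:ℝ) ^ 4 := by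
    have h1 := measure_le_le_exp_mul_mgf (μ := μ) (X := S) (-r)
      (neg_nonpos.2 ht0pos) (hint (-t0) S hmS n hSbd)
    refine h1.trans ?_
    have he : -(-t0) * (-r) = -t0 * r := by ring
    rw [he]
    calc exp (-t0 * r) * mgf S μ (-t0)
        ≤ exp (-t0 * r) * exp ((n:ℝ) * t0 ^ 2 / 8) := by
          refine mul_le_mul_of_nonneg_left ?_ (exp_nonneg _)
          have := hmgfS (-t0)
          simpa using this
    _ = exp (-(2 * c / n)) := by rw [← Real.exp_add, hexp1]
    _ ≤ 1 / (n:ℝ) ^ 4 := hfinal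
  -- rewrite the event
  have hSform : ∀ ω, (A ω * (A ω)ᵀ) u v - (Q * Qᵀ) u v = S ω := by
    intro ω
    simp [hSdef, hXdef, Matrix.mul_apply, Matrix.transpose_apply,
      Finset.sum_sub_distrib]
  have hEset : {ω | c ≤ ((A ω * (A ω)ᵀ) u v - (Q * Qᵀ) u v) ^ 2}
      = {ω | c ≤ S ω ^ 2} := by
    ext ω; rw [Set.mem_setOf_eq, Set.mem_setOf_eq, hSform ω]
  have hsub : {ω | c ≤ S ω ^ 2} ⊆ {ω | r ≤ S ω} ∪ {ω | S ω ≤ -r} := by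
    intro ω hω
    have habs : r ≤ |S ω| := by
      rw [hrdef, ← Real.sqrt_sq_eq_abs]
      exact Real.sqrt_le_sqrt hω
    rcases abs_cases (S ω) with ⟨he, _⟩ | ⟨he, _⟩
    · exact Or.inl (by rw [Set.mem_setOf_eq]; linarith [he ▸ habs])
    · exact Or.inr (by rw [Set.mem_setOf_eq]; linarith [he ▸ habs])
  have hposn4 : (0:ℝ) ≤ 1 / (n:ℝ) ^ 4 := by positivity
  have hm1 : μ {ω | r ≤ S ω} ≤ ENNReal.ofReal (1 / (n:ℝ) ^ 4) :=
    (ENNReal.le_ofReal_iff_toReal_le (measure_ne_top μ _) hposn4).2 hup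
  have hm2 : μ {ω | S ω ≤ -r} ≤ ENNReal.ofReal (1 / (n:ℝ) ^ 4) :=
    (ENNReal.le_ofReal_iff_toReal_le (measure_ne_top μ _) hposn4).2 hdown
  calc μ {ω | c ≤ ((A ω * (A ω)ᵀ) u v - (Q * Qᵀ) u v) ^ 2}
      ≤ μ ({ω | r ≤ S ω} ∪ {ω | S ω ≤ -r}) := by
        rw [hEset]; exact measure_mono hsub
  _ ≤ μ {ω | r ≤ S ω} + μ {ω | S ω ≤ -r} := measure_union_le _ _
  _ ≤ ENNReal.ofReal (1 / (n:ℝ) ^ 4) + ENNReal.ofReal (1 / (n:ℝ) ^ 4) :=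
      add_le_add hm1 hm2
  _ = ENNReal.ofReal (2 / (n:ℝ) ^ 4) := by
      rw [← ENNReal.ofReal_add hposn4 hposn4]
      congr 1; ring
end

section
/- Let (A^{(n)}) be a sequence of random 0-1 matrices, where A^{(n)} ∈ {0,1}^{n×n} has independent Bernoulli entries with mean matrix Q^{(n)} ∈ [0,1]^{n×n}. Then almost surely, ‖A^{(n)}(A^{(n)})ᵀ − Q^{(n)}(Q^{(n)})ᵀ‖_F ≤ √3 · n^{3/2} √(log n) for all but finitely many n. -/
open MeasureTheory ProbabilityTheory Matrix Filter

noncomputable def frob {n m : ℕ} (M : Matrix (Fin n) (Fin m) ℝ) : ℝ :=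
  Real.sqrt (∑ i, ∑ j, (M i j) ^ 2)

open scoped ENNReal

lemma hoeff_core {p : ℝ} (hp0 : 0 ≤ p) (hp1 : p ≤ 1) {t : ℝ} (ht : 0 ≤ t) :
    (1 - p) * Real.exp (-(t * p)) + p * Real.exp (t * (1 - p)) ≤ Real.exp (t ^ 2 / 8) := by
  set D : ℝ → ℝ := fun s => 1 - p + p * Real.exp s with hDdef
  have hD : ∀ s, 0 < D s := by
    intro s
    rcases eq_or_lt_of_le hp1 with h | h
    · simpa [hDdef, h] using Real.exp_pos s
    · have : 0 ≤ p * Real.exp s := mul_nonneg hp0 (Real.exp_pos s).le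
      simp only [hDdef]; linarith
  set u : ℝ → ℝ := fun s => p * Real.exp s / D s with hudef
  set g : ℝ → ℝ := fun s => s / 4 + p - u s with hgdef
  set G : ℝ → ℝ := fun s => s ^ 2 / 8 + s * p - Real.log (D s) with hGdef
  have hDderiv : ∀ s, HasDerivAt D (p * Real.exp s) s := by
    intro s
    exact ((Real.hasDerivAt_exp s).const_mul p).const_add (1 - p)
  have hGderiv : ∀ s, HasDerivAt G (g s) s := by
    intro s
    have h1 : HasDerivAt (fun s : ℝ => s ^ 2 / 8) (s / 4) s := by
      have := (hasDerivAt_pow 2 s).div_const 8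
      exact this.congr_deriv (by norm_num; ring)
    have h2 : HasDerivAt (fun s : ℝ => s * p) p s := by
      simpa using (hasDerivAt_id s).mul_const p
    have h3 : HasDerivAt (fun s => Real.log (D s)) (p * Real.exp s / D s) s :=
      (hDderiv s).log (hD s).ne'
    exact (h1.add h2).sub h3
  have huderiv : ∀ s, HasDerivAt u (u s * (1 - u s)) s := by
    intro s
    have h := ((Real.hasDerivAt_exp s).const_mul p).div (hDderiv s) (hD s).ne'
    refine h.congr_deriv ?_
    have hDs := (hD s).ne'
    simp only [hudef, hDdef]
    have hDs' : 1 - p + p * Real.exp s ≠ 0 := hDs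
    field_simp
  have hgderiv : ∀ s, HasDerivAt g (1 / 4 - u s * (1 - u s)) s := by
    intro s
    have h1 : HasDerivAt (fun s : ℝ => s / 4 + p) (1 / 4) s := by
      simpa using ((hasDerivAt_id s).div_const 4).add_const p
    exact h1.sub (huderiv s)
  have hgmono : Monotone g := by
    apply monotone_of_deriv_nonneg (fun s => (hgderiv s).differentiableAt)
    intro s
    rw [(hgderiv s).deriv]
    nlinarith [sq_nonneg (2 * u s - 1)]
  have hg0 : g 0 = 0 := by simp [hgdef, hudef, hDdef]
  have hgnn : ∀ s, 0 ≤ s → 0 ≤ g s := fun s hs => hg0 ▸ hgmono hs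
  have hGmono : MonotoneOn G (Set.Ici 0) := by
    apply monotoneOn_of_deriv_nonneg (convex_Ici 0)
      (fun s _ => (hGderiv s).differentiableAt.continuousAt.continuousWithinAt)
      (fun s _ => (hGderiv s).differentiableAt.differentiableWithinAt)
    intro s hs
    rw [(hGderiv s).deriv]
    exact hgnn s (le_of_lt (by simpa using hs))
  have hG0 : G 0 = 0 := by simp [hGdef, hDdef]
  have hGt : 0 ≤ G t := hG0 ▸ hGmono Set.self_mem_Ici ht ht
  have hlog : Real.log (D t) ≤ t ^ 2 / 8 + t * p := by
    simp only [hGdef] at hGt; linarith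
  have hDle : D t ≤ Real.exp (t ^ 2 / 8 + t * p) :=
    (Real.log_le_iff_le_exp (hD t)).mp hlog
  have key : Real.exp (-(t * p)) * D t ≤ Real.exp (t ^ 2 / 8) := by
    calc Real.exp (-(t * p)) * D t ≤ Real.exp (-(t * p)) * Real.exp (t ^ 2 / 8 + t * p) := by
          exact mul_le_mul_of_nonneg_left hDle (Real.exp_pos _).le
      _ = Real.exp (t ^ 2 / 8) := by rw [← Real.exp_add]; ring_nf
  calc (1 - p) * Real.exp (-(t * p)) + p * Real.exp (t * (1 - p))
      = Real.exp (-(t * p)) * D t := by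
        simp only [hDdef]
        rw [show t * (1 - p) = t + -(t * p) by ring, Real.exp_add]
        ring
    _ ≤ Real.exp (t ^ 2 / 8) := key

lemma mgf_bernoulli_le {Ω : Type*} [MeasurableSpace Ω] {μ : Measure Ω} [IsProbabilityMeasure μ]
    {Y : Ω → ℝ} (hm : Measurable Y) (h01 : ∀ ω, Y ω = 0 ∨ Y ω = 1) {p : ℝ}
    (hp0 : 0 ≤ p) (hp1 : p ≤ 1) (hμ : μ {ω | Y ω = 1} = ENNReal.ofReal p)
    {t : ℝ} (ht : 0 ≤ t) :
    mgf (fun ω => Y ω - p) μ t ≤ Real.exp (t ^ 2 / 8) := by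
  have hs : MeasurableSet {ω | Y ω = 1} := by
    have : {ω | Y ω = 1} = Y ⁻¹' {1} := by ext ω; simp
    rw [this]; exact hm (measurableSet_singleton 1)
  have hfun : (fun ω => Real.exp (t * (Y ω - p)))
      = fun ω => Set.indicator {ω | Y ω = 1}
          (fun _ => Real.exp (t * (1 - p)) - Real.exp (-(t * p))) ω + Real.exp (-(t * p)) := by
    funext ω
    rcases h01 ω with h | h
    · rw [Set.indicator_of_notMem (by simp [h] : ω ∉ {ω | Y ω = 1})]
      rw [h]; ring_nf
    · rw [Set.indicator_of_mem (by simp [h] : ω ∈ {ω | Y ω = 1})]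
      rw [h]; ring_nf
  have hint : mgf (fun ω => Y ω - p) μ t
      = p * (Real.exp (t * (1 - p)) - Real.exp (-(t * p))) + Real.exp (-(t * p)) := by
    rw [mgf]
    simp only [hfun]
    rw [integral_add ((integrable_const _).indicator hs) (integrable_const _),
      integral_indicator_const _ hs, integral_const, measureReal_def, hμ, ENNReal.toReal_ofReal hp0]
    simp [smul_eq_mul]
  rw [hint]
  calc p * (Real.exp (t * (1 - p)) - Real.exp (-(t * p))) + Real.exp (-(t * p))
      = (1 - p) * Real.exp (-(t * p)) + p * Real.exp (t * (1 - p)) := by ring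
    _ ≤ Real.exp (t ^ 2 / 8) := hoeff_core hp0 hp1 ht

lemma chernoff_sum {Ω : Type*} [MeasurableSpace Ω] {μ : Measure Ω} [IsProbabilityMeasure μ]
    {n : ℕ} (hn : 0 < n) {Y : Fin n → Ω → ℝ} {p : Fin n → ℝ}
    (hm : ∀ k, Measurable (Y k)) (h01 : ∀ k ω, Y k ω = 0 ∨ Y k ω = 1)
    (hp0 : ∀ k, 0 ≤ p k) (hp1 : ∀ k, p k ≤ 1)
    (hμ : ∀ k, μ {ω | Y k ω = 1} = ENNReal.ofReal (p k))
    (hind : iIndepFun Y μ)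
    {a : ℝ} (ha : 0 ≤ a) :
    μ {ω | a ≤ ∑ k, (Y k ω - p k)} ≤ ENNReal.ofReal (Real.exp (-(2 * a ^ 2 / n))) := by
  classical
  set t : ℝ := 4 * a / n with htdef
  have hnR : (0 : ℝ) < n := by exact_mod_cast hn
  have ht : 0 ≤ t := by positivity
  set Z : Fin n → Ω → ℝ := fun k ω => Y k ω - p k with hZdef
  have hZm : ∀ k, Measurable (Z k) := fun k => (hm k).sub_const _
  have hindZ : iIndepFun Z μ := by
    have := hind.comp (fun k (x : ℝ) => x - p k) (fun k => measurable_id.sub_const _)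
    exact this
  have hXm : Measurable (fun ω => ∑ k, Z k ω) :=
    Finset.measurable_sum Finset.univ (fun k _ => hZm k)
  have hXle : ∀ ω, (∑ k, Z k ω) ≤ n := by
    intro ω
    calc (∑ k, Z k ω) ≤ ∑ _k : Fin n, (1 : ℝ) := by
          apply Finset.sum_le_sum
          intro k _
          rcases h01 k ω with h | h <;> simp only [hZdef, h] <;> linarith [hp0 k]
      _ = n := by simp
  have hint : Integrable (fun ω => Real.exp (t * (∑ k, Z k ω))) μ := by
    apply Integrable.mono' (integrable_const (Real.exp (t * n)))
      ((hXm.const_mul t).exp.aestronglyMeasurable)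
    filter_upwards with ω
    rw [Real.norm_eq_abs, Real.abs_exp]
    exact Real.exp_le_exp.mpr (mul_le_mul_of_nonneg_left (hXle ω) ht)
  have hsum_eq : (fun ω => ∑ k, Z k ω) = ∑ k, Z k := by
    funext ω; rw [Finset.sum_apply]
  have hmgf : mgf (fun ω => ∑ k, Z k ω) μ t ≤ Real.exp (n * t ^ 2 / 8) := by
    rw [hsum_eq, hindZ.mgf_sum hZm]
    calc (∏ k, mgf (Z k) μ t) ≤ ∏ _k : Fin n, Real.exp (t ^ 2 / 8) := by
          apply Finset.prod_le_prod (fun k _ => mgf_nonneg)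
          intro k _
          exact mgf_bernoulli_le (hm k) (h01 k) (hp0 k) (hp1 k) (hμ k) ht
      _ = Real.exp (n * t ^ 2 / 8) := by
          rw [Finset.prod_const, ← Real.exp_nat_mul]
          congr 1; simp; ring
  have hch := measure_ge_le_exp_mul_mgf (μ := μ) (X := fun ω => ∑ k, Z k ω) a ht hint
  have hbound : (μ {ω | a ≤ ∑ k, (Y k ω - p k)}).toReal ≤ Real.exp (-(2 * a ^ 2 / n)) := by
    refine hch.trans ?_
    calc Real.exp (-t * a) * mgf (fun ω => ∑ k, Z k ω) μ t
        ≤ Real.exp (-t * a) * Real.exp (n * t ^ 2 / 8) :=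
          mul_le_mul_of_nonneg_left hmgf (Real.exp_pos _).le
      _ = Real.exp (-t * a + n * t ^ 2 / 8) := by rw [← Real.exp_add]
      _ = Real.exp (-(2 * a ^ 2 / n)) := by
          congr 1
          rw [htdef]
          field_simp
          ring
  rw [← ENNReal.ofReal_toReal (measure_ne_top μ _)]
  exact ENNReal.ofReal_le_ofReal hbound

lemma pair_tail {Ω : Type*} [MeasurableSpace Ω] {μ : Measure Ω} [IsProbabilityMeasure μ]
    {n : ℕ} (hn : 0 < n)
    {Q : Matrix (Fin n) (Fin n) ℝ} (hQ : ∀ u v, Q u v ∈ Set.Icc (0 : ℝ) 1)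
    {A : Ω → Matrix (Fin n) (Fin n) ℝ} (hmeas : ∀ u v, Measurable (fun ω => A ω u v))
    (h01 : ∀ ω u v, A ω u v = 0 ∨ A ω u v = 1)
    (hber : ∀ u v, μ {ω | A ω u v = 1} = ENNReal.ofReal (Q u v))
    (hind : iIndepFun (fun (p : Fin n × Fin n) ω => A ω p.1 p.2) μ)
    {i j : Fin n} (hij : i ≠ j) {a : ℝ} (ha : 0 ≤ a) :
    μ {ω | a < |∑ k, (A ω i k * A ω j k - Q i k * Q j k)|}
      ≤ ENNReal.ofReal (2 * Real.exp (-(2 * a ^ 2 / n))) := by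
  classical
  set E : Fin n → Set Ω := fun k =>
    (fun ω => A ω i k) ⁻¹' {1} ∩ (fun ω => A ω j k) ⁻¹' {1} with hEdef
  have hEmeas : ∀ k, MeasurableSet (E k) := fun k =>
    ((hmeas i k) (measurableSet_singleton 1)).inter ((hmeas j k) (measurableSet_singleton 1))
  have hprod : ∀ k, μ (E k) = ENNReal.ofReal (Q i k) * ENNReal.ofReal (Q j k) := by
    intro k
    have hne : ((i, k) : Fin n × Fin n) ≠ (j, k) := by simp [hij]
    have := (hind.indepFun hne).measure_inter_preimage_eq_mul {1} {1}
      (measurableSet_singleton 1) (measurableSet_singleton 1)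
    have hpre : ∀ u v : Fin n, (fun ω => A ω u v) ⁻¹' ({1} : Set ℝ) = {ω | A ω u v = 1} := by
      intro u v; ext ω; simp
    rw [hEdef]
    simp only []
    rw [this, hpre, hpre, hber, hber]
  have hiIndepSet : iIndepSet E μ := by
    rw [iIndepSet_iff_meas_biInter hEmeas]
    intro s
    set T : Finset (Fin n × Fin n) :=
      s.image (fun k => ((i, k) : Fin n × Fin n)) ∪ s.image (fun k => ((j, k) : Fin n × Fin n))
      with hTdef
    have hset : (⋂ k ∈ s, E k) = ⋂ q ∈ T, (fun ω => A ω q.1 q.2) ⁻¹' {1} := by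
      ext ω
      simp only [hEdef, hTdef, Set.mem_iInter, Set.mem_inter_iff, Set.mem_preimage,
        Set.mem_singleton_iff, Finset.mem_union, Finset.mem_image]
      constructor
      · rintro h q (⟨k, hk, rfl⟩ | ⟨k, hk, rfl⟩)
        · exact (h k hk).1
        · exact (h k hk).2
      · intro h k hk
        exact ⟨h (i, k) (Or.inl ⟨k, hk, rfl⟩), h (j, k) (Or.inr ⟨k, hk, rfl⟩)⟩
    have hmeasT := hind.meas_biInter (S := T)
      (s := fun q => (fun ω => A ω q.1 q.2) ⁻¹' {1})
      (fun q _ => ⟨{1}, measurableSet_singleton 1, rfl⟩)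
    have hdisj : Disjoint (s.image (fun k => ((i, k) : Fin n × Fin n)))
        (s.image (fun k => ((j, k) : Fin n × Fin n))) := by
      simp only [Finset.disjoint_left, Finset.mem_image]
      rintro ⟨u, v⟩ ⟨k, hk, hkeq⟩ ⟨k', hk', hkeq'⟩
      exact hij ((Prod.ext_iff.mp hkeq).1.trans (Prod.ext_iff.mp hkeq').1.symm)
    have hinj_i : ∀ k ∈ s, ∀ k' ∈ s, ((i, k) : Fin n × Fin n) = (i, k') → k = k' := by
      intro k _ k' _ h; simpa using h
    have hinj_j : ∀ k ∈ s, ∀ k' ∈ s, ((j, k) : Fin n × Fin n) = (j, k') → k = k' := by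
      intro k _ k' _ h; simpa using h
    rw [hset, hmeasT, hTdef, Finset.prod_union hdisj, Finset.prod_image hinj_i,
      Finset.prod_image hinj_j, ← Finset.prod_mul_distrib]
    apply Finset.prod_congr rfl
    intro k _
    rw [hprod k]
    show μ {ω | A ω i k = 1} * μ {ω | A ω j k = 1} = _
    rw [hber, hber]
  set Y : Fin n → Ω → ℝ := fun k ω => A ω i k * A ω j k with hYdef
  set p : Fin n → ℝ := fun k => Q i k * Q j k with hpdef
  have hYeq : Y = fun k => (E k).indicator (fun _ => (1 : ℝ)) := by
    funext k ω
    rcases h01 ω i k with h1 | h1 <;> rcases h01 ω j k with h2 | h2 <;>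
      simp [hYdef, hEdef, Set.indicator_apply, h1, h2]
  have hYind : iIndepFun Y μ := by
    rw [hYeq]; exact hiIndepSet.iIndepFun_indicator
  have hYm : ∀ k, Measurable (Y k) := fun k => (hmeas i k).mul (hmeas j k)
  have hY01 : ∀ k ω, Y k ω = 0 ∨ Y k ω = 1 := by
    intro k ω
    rcases h01 ω i k with h1 | h1 <;> rcases h01 ω j k with h2 | h2 <;> simp [hYdef, h1, h2]
  have hp0 : ∀ k, 0 ≤ p k := fun k => mul_nonneg (hQ i k).1 (hQ j k).1
  have hp1 : ∀ k, p k ≤ 1 := fun k =>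
    mul_le_one₀ (hQ i k).2 (hQ j k).1 (hQ j k).2
  have hYone : ∀ k, {ω | Y k ω = 1} = E k := by
    intro k
    ext ω
    rcases h01 ω i k with h1 | h1 <;> rcases h01 ω j k with h2 | h2 <;>
      simp [hYdef, hEdef, h1, h2]
  have hμY : ∀ k, μ {ω | Y k ω = 1} = ENNReal.ofReal (p k) := by
    intro k
    rw [hYone k, hprod k, hpdef, ← ENNReal.ofReal_mul (hQ i k).1]
  have hup := chernoff_sum hn hYm hY01 hp0 hp1 hμY hYind ha
  -- lower tail
  set Y' : Fin n → Ω → ℝ := fun k ω => 1 - Y k ω with hY'def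
  set p' : Fin n → ℝ := fun k => 1 - p k with hp'def
  have hY'ind : iIndepFun Y' μ := by
    have := hYind.comp (fun k (x : ℝ) => 1 - x) (fun k => measurable_const.sub measurable_id)
    exact this
  have hY'm : ∀ k, Measurable (Y' k) := fun k => measurable_const.sub (hYm k)
  have hY'01 : ∀ k ω, Y' k ω = 0 ∨ Y' k ω = 1 := by
    intro k ω
    rcases hY01 k ω with h | h <;> simp [hY'def, h]
  have hp'0 : ∀ k, 0 ≤ p' k := fun k => by simp [hp'def]; linarith [hp1 k]
  have hp'1 : ∀ k, p' k ≤ 1 := fun k => by simp [hp'def]; linarith [hp0 k]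
  have hμY' : ∀ k, μ {ω | Y' k ω = 1} = ENNReal.ofReal (p' k) := by
    intro k
    have hsetY' : {ω | Y' k ω = 1} = {ω | Y k ω = 1}ᶜ := by
      ext ω
      rcases hY01 k ω with h | h <;> simp [hY'def, h]
    rw [hsetY', prob_compl_eq_one_sub (by rw [hYone k]; exact hEmeas k), hμY k, hp'def,
      ENNReal.ofReal_sub _ (hp0 k), ENNReal.ofReal_one]
  have hlow := chernoff_sum hn hY'm hY'01 hp'0 hp'1 hμY' hY'ind ha
  have hlowset : {ω | a ≤ ∑ k, (Y' k ω - p' k)} = {ω | a ≤ -∑ k, (Y k ω - p k)} := by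
    ext ω
    have : ∑ k, (Y' k ω - p' k) = -∑ k, (Y k ω - p k) := by
      rw [← Finset.sum_neg_distrib]
      apply Finset.sum_congr rfl
      intro k _
      simp only [hY'def, hp'def]; ring
    simp only [Set.mem_setOf_eq]
    rw [this]
  rw [hlowset] at hlow
  have hsub : {ω | a < |∑ k, (A ω i k * A ω j k - Q i k * Q j k)|}
      ⊆ {ω | a ≤ ∑ k, (Y k ω - p k)} ∪ {ω | a ≤ -∑ k, (Y k ω - p k)} := by
    intro ω hω
    simp only [Set.mem_setOf_eq] at hω
    have heq : ∑ k, (A ω i k * A ω j k - Q i k * Q j k) = ∑ k, (Y k ω - p k) := by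
      apply Finset.sum_congr rfl; intro k _; simp [hYdef, hpdef]
    rw [heq] at hω
    rcases le_or_gt 0 (∑ k, (Y k ω - p k)) with hpos | hneg
    · left
      simp only [Set.mem_setOf_eq]
      rw [abs_of_nonneg hpos] at hω
      linarith
    · right
      simp only [Set.mem_setOf_eq]
      rw [abs_of_neg hneg] at hω
      linarith
  calc μ {ω | a < |∑ k, (A ω i k * A ω j k - Q i k * Q j k)|}
      ≤ μ ({ω | a ≤ ∑ k, (Y k ω - p k)} ∪ {ω | a ≤ -∑ k, (Y k ω - p k)}) := measure_mono hsub
    _ ≤ μ {ω | a ≤ ∑ k, (Y k ω - p k)} + μ {ω | a ≤ -∑ k, (Y k ω - p k)} := measure_union_le _ _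
    _ ≤ ENNReal.ofReal (Real.exp (-(2 * a ^ 2 / n))) + ENNReal.ofReal (Real.exp (-(2 * a ^ 2 / n))) :=
        add_le_add hup hlow
    _ = ENNReal.ofReal (2 * Real.exp (-(2 * a ^ 2 / n))) := by
        rw [← ENNReal.ofReal_add (Real.exp_pos _).le (Real.exp_pos _).le]; ring_nf

/-- For a sequence of random 0-1 matrices `A⁽ⁿ⁾ ∈ {0,1}^{n×n}` with
independent Bernoulli entries of mean matrices `Q⁽ⁿ⁾ ∈ [0,1]^{n×n}`, almost surely
`‖A⁽ⁿ⁾(A⁽ⁿ⁾)ᵀ − Q⁽ⁿ⁾(Q⁽ⁿ⁾)ᵀ‖_F ≤ √3 · n^{3/2} √(log n)` for all but finitely many `n`. -/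
theorem stmt2 {Ω : Type*} [MeasurableSpace Ω]
    (μ : Measure Ω) [IsProbabilityMeasure μ]
    (Q : ∀ n : ℕ, Matrix (Fin n) (Fin n) ℝ)
    (hQ : ∀ n u v, Q n u v ∈ Set.Icc (0 : ℝ) 1)
    (A : ∀ n : ℕ, Ω → Matrix (Fin n) (Fin n) ℝ)
    (hmeas : ∀ n (u v : Fin n), Measurable (fun ω => A n ω u v))
    (h01 : ∀ n ω (u v : Fin n), A n ω u v = 0 ∨ A n ω u v = 1)
    (hber : ∀ n (u v : Fin n), μ {ω | A n ω u v = 1} = ENNReal.ofReal (Q n u v))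
    (hind : ∀ n, iIndepFun
      (fun (p : Fin n × Fin n) ω => A n ω p.1 p.2) μ) :
    ∀ᵐ ω ∂μ, ∀ᶠ n : ℕ in atTop,
      frob (A n ω * (A n ω)ᵀ - Q n * (Q n)ᵀ)
        ≤ Real.sqrt 3 * (n : ℝ) ^ ((3 : ℝ) / 2) * Real.sqrt (Real.log n) := by
  classical
  set bad : ℕ → Set Ω := fun n => ⋃ i : Fin n, ⋃ j : Fin n,
    {ω | i ≠ j ∧ Real.sqrt (2 * n * Real.log n)
      < |∑ k, (A n ω i k * A n ω j k - Q n i k * Q n j k)|} with hbaddef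
  have hbad_le : ∀ n : ℕ, μ (bad n) ≤ ENNReal.ofReal (2 / (n : ℝ) ^ 2) := by
    intro n
    by_cases h2 : 2 ≤ n
    · have hn0 : 0 < n := by omega
      have hnR : (0 : ℝ) < n := by exact_mod_cast hn0
      have hlog0 : 0 ≤ Real.log n := Real.log_nonneg (by exact_mod_cast h2.trans' (by norm_num))
      set a : ℝ := Real.sqrt (2 * n * Real.log n) with hadef
      have ha : 0 ≤ a := Real.sqrt_nonneg _
      have hterm : ∀ i j : Fin n,
          μ {ω | i ≠ j ∧ a < |∑ k, (A n ω i k * A n ω j k - Q n i k * Q n j k)|}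
            ≤ ENNReal.ofReal (2 * Real.exp (-(2 * a ^ 2 / n))) := by
        intro i j
        by_cases hij : i = j
        · have : {ω | i ≠ j ∧ a < |∑ k, (A n ω i k * A n ω j k - Q n i k * Q n j k)|} = ∅ := by
            ext ω; simp [hij]
          rw [this]; simp
        · calc μ {ω | i ≠ j ∧ a < |∑ k, (A n ω i k * A n ω j k - Q n i k * Q n j k)|}
              ≤ μ {ω | a < |∑ k, (A n ω i k * A n ω j k - Q n i k * Q n j k)|} :=
                measure_mono (fun ω hω => hω.2)
            _ ≤ _ := pair_tail hn0 (hQ n) (hmeas n) (fun ω u v => h01 n ω u v) (hber n)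
                (hind n) hij ha
      have hcount : μ (bad n) ≤ (n : ℝ≥0∞) * ((n : ℝ≥0∞)
          * ENNReal.ofReal (2 * Real.exp (-(2 * a ^ 2 / n)))) := by
        calc μ (bad n) ≤ ∑ i : Fin n, μ (⋃ j : Fin n,
              {ω | i ≠ j ∧ a < |∑ k, (A n ω i k * A n ω j k - Q n i k * Q n j k)|}) :=
              measure_iUnion_fintype_le _ _
          _ ≤ ∑ i : Fin n, ∑ j : Fin n, μ
              {ω | i ≠ j ∧ a < |∑ k, (A n ω i k * A n ω j k - Q n i k * Q n j k)|} :=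
              Finset.sum_le_sum (fun i _ => measure_iUnion_fintype_le _ _)
          _ ≤ ∑ _i : Fin n, ∑ _j : Fin n,
              ENNReal.ofReal (2 * Real.exp (-(2 * a ^ 2 / n))) :=
              Finset.sum_le_sum (fun i _ => Finset.sum_le_sum (fun j _ => hterm i j))
          _ = (n : ℝ≥0∞) * ((n : ℝ≥0∞) * ENNReal.ofReal (2 * Real.exp (-(2 * a ^ 2 / n)))) := by
              simp [Finset.sum_const, Finset.card_univ, nsmul_eq_mul, mul_assoc]
      refine hcount.trans ?_
      rw [show ((n : ℝ≥0∞)) = ENNReal.ofReal (n : ℝ) by simp,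
        ← ENNReal.ofReal_mul (by positivity), ← ENNReal.ofReal_mul (by positivity)]
      apply ENNReal.ofReal_le_ofReal
      have hsq : a ^ 2 = 2 * n * Real.log n := Real.sq_sqrt (by positivity)
      have hexp : Real.exp (-(2 * a ^ 2 / n)) = ((n : ℝ) ^ 4)⁻¹ := by
        have h1 : -(2 * a ^ 2 / n) = Real.log (((n : ℝ) ^ 4)⁻¹) := by
          rw [Real.log_inv, Real.log_pow, hsq]
          field_simp
          ring
        rw [h1, Real.exp_log (by positivity)]
      rw [hexp]
      apply le_of_eq
      field_simp
    · have hempty : bad n = ∅ := by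
        have hij : ∀ i j : Fin n, i = j := by
          intro i j
          have hi := i.isLt
          have hj := j.isLt
          apply Fin.ext
          omega
        rw [hbaddef]
        ext ω
        simp only [Set.mem_iUnion, Set.mem_setOf_eq, Set.mem_empty_iff_false, iff_false,
          not_exists, not_and]
        intro i j h
        exact absurd (hij i j) h
      rw [hempty]
      simp
  have hsummable : Summable (fun n : ℕ => 2 / (n : ℝ) ^ 2) := by
    have h := (Real.summable_one_div_nat_pow (p := 2)).mpr one_lt_two
    have := h.mul_left 2
    apply this.congr
    intro n
    rw [mul_one_div]
  have hts : (∑' n, μ (bad n)) ≠ ⊤ := by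
    apply ne_top_of_le_ne_top (b := ENNReal.ofReal (∑' n : ℕ, 2 / (n : ℝ) ^ 2))
    · exact ENNReal.ofReal_ne_top
    · rw [ENNReal.ofReal_tsum_of_nonneg (fun n => by positivity) hsummable]
      exact ENNReal.tsum_le_tsum hbad_le
  have hae := MeasureTheory.ae_eventually_notMem hts
  filter_upwards [hae] with ω hω
  filter_upwards [hω, eventually_ge_atTop 3] with n hgood hn3
  have hnR : (0 : ℝ) < n := by
    have : (3:ℝ) ≤ n := by exact_mod_cast hn3
    linarith
  have hlog1 : 1 ≤ Real.log n := by
    rw [Real.le_log_iff_exp_le hnR]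
    calc Real.exp 1 ≤ 2.7182818286 := Real.exp_one_lt_d9.le
      _ ≤ 3 := by norm_num
      _ ≤ (n : ℝ) := by exact_mod_cast hn3
  have hlog0 : (0:ℝ) ≤ Real.log n := by linarith
  simp only [hbaddef, Set.mem_iUnion, Set.mem_setOf_eq, not_exists, not_and, not_lt] at hgood
  set M : Matrix (Fin n) (Fin n) ℝ := A n ω * (A n ω)ᵀ - Q n * (Q n)ᵀ with hMdef
  have hentry : ∀ i j, M i j = ∑ k, (A n ω i k * A n ω j k - Q n i k * Q n j k) := by
    intro i j
    simp [hMdef, Matrix.sub_apply, Matrix.mul_apply, Matrix.transpose_apply,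
      Finset.sum_sub_distrib]
  have hterm : ∀ i j : Fin n, (M i j) ^ 2
      ≤ 2 * n * Real.log n + (if i = j then (n : ℝ) ^ 2 else 0) := by
    intro i j
    by_cases hij : i = j
    · subst hij
      have habs : |M i i| ≤ n := by
        rw [hentry]
        calc |∑ k, (A n ω i k * A n ω i k - Q n i k * Q n i k)|
            ≤ ∑ k, |A n ω i k * A n ω i k - Q n i k * Q n i k| :=
            Finset.abs_sum_le_sum_abs _ _
          _ ≤ ∑ _k : Fin n, (1:ℝ) := by
              apply Finset.sum_le_sum
              intro k _
              have hq := hQ n i k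
              rw [abs_le]
              rcases h01 n ω i k with h | h <;> rw [h] <;>
                constructor <;> nlinarith [hq.1, hq.2]
          _ = n := by simp
      have := abs_le.mp habs
      rw [if_pos rfl]
      nlinarith [this.1, this.2, mul_nonneg (by linarith : (0:ℝ) ≤ 2 * (n:ℝ)) hlog0]
    · have habs : |M i j| ≤ Real.sqrt (2 * n * Real.log n) := by
        rw [hentry]; exact hgood i j hij
      have h2 : (M i j)^2 ≤ Real.sqrt (2 * n * Real.log n) ^ 2 := by
        rw [← sq_abs]
        exact pow_le_pow_left₀ (abs_nonneg _) habs 2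
      rw [Real.sq_sqrt (by positivity)] at h2
      simpa [hij] using h2
  have hsum : ∑ i : Fin n, ∑ j : Fin n, (M i j) ^ 2 ≤ 3 * (n:ℝ) ^ 3 * Real.log n := by
    calc ∑ i : Fin n, ∑ j : Fin n, (M i j) ^ 2
        ≤ ∑ i : Fin n, ∑ j : Fin n,
            (2 * n * Real.log n + (if i = j then (n : ℝ) ^ 2 else 0)) :=
          Finset.sum_le_sum (fun i _ => Finset.sum_le_sum (fun j _ => hterm i j))
      _ = (n:ℝ) * ((n:ℝ) * (2 * n * Real.log n)) + (n:ℝ) * (n:ℝ)^2 := by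
          simp only [Finset.sum_add_distrib, Finset.sum_const, Finset.card_univ,
            Fintype.card_fin, nsmul_eq_mul, Finset.sum_ite_eq, Finset.mem_univ, if_pos]
      _ ≤ 3 * (n:ℝ) ^ 3 * Real.log n := by nlinarith [pow_pos hnR 3]
  have hfrob : frob M ≤ Real.sqrt (3 * (n:ℝ)^3 * Real.log n) := by
    rw [frob]
    exact Real.sqrt_le_sqrt hsum
  refine hfrob.trans (le_of_eq ?_)
  rw [show (3:ℝ) * (n:ℝ)^3 * Real.log n = 3 * ((n:ℝ)^3 * Real.log n) by ring,
    Real.sqrt_mul (by norm_num), Real.sqrt_mul (by positivity), ← mul_assoc]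
  congr 2
  rw [Real.sqrt_eq_rpow, ← Real.rpow_natCast ((n:ℝ)) 3, ← Real.rpow_mul (le_of_lt hnR)]
  norm_num
end

section
/- Let ν, μ ∈ ℝ^{K×d} be such that νᵀν and μᵀμ have all eigenvalues greater than α > 0. Let τ : [n] → [K] and suppose each block size n_i = |{u : τ(u) = i}| satisfies n_i ≥ γn for some γ > 0. Define X, Y ∈ ℝ^{n×d} by row u: X_u = ν_{τ(u)}, Y_u = μ_{τ(u)}. Then the d-th largest singular value satisfies σ_d(XYᵀ) ≥ αγn. -/
open Matrix

lemma aux_cs {m : ℕ} (w z : Fin m → ℝ) (c : ℝ) (hc : 0 ≤ c)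
    (h1 : c * (w ⬝ᵥ w) ≤ w ⬝ᵥ z) : c * (w ⬝ᵥ z) ≤ z ⬝ᵥ z := by
  have hzz : (0:ℝ) ≤ z ⬝ᵥ z := Finset.sum_nonneg fun i _ => mul_self_nonneg _
  rcases le_or_gt (w ⬝ᵥ z) 0 with h | h
  · nlinarith
  · have hcs : (w ⬝ᵥ z) ^ 2 ≤ (w ⬝ᵥ w) * (z ⬝ᵥ z) := by
      simpa [dotProduct, pow_two] using
        Finset.sum_mul_sq_le_sq_mul_sq Finset.univ w z
    nlinarith

lemma aux_posdef {K d : ℕ} (ν : Matrix (Fin K) (Fin d) ℝ) (α : ℝ)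
    (hν : (νᵀ * ν - α • (1 : Matrix (Fin d) (Fin d) ℝ)).PosDef) (w : Fin d → ℝ) :
    α * (w ⬝ᵥ w) ≤ (ν *ᵥ w) ⬝ᵥ (ν *ᵥ w) := by
  have key : (ν *ᵥ w) ⬝ᵥ (ν *ᵥ w) = w ⬝ᵥ ((νᵀ * ν) *ᵥ w) := by
    rw [← mulVec_mulVec, dotProduct_mulVec w νᵀ, vecMul_transpose]
  rcases eq_or_ne w 0 with rfl | hw
  · simp
  · have := hν.dotProduct_mulVec_pos hw
    have hexp : (star w) ⬝ᵥ ((νᵀ * ν - α • (1 : Matrix (Fin d) (Fin d) ℝ)) *ᵥ w)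
        = w ⬝ᵥ ((νᵀ * ν) *ᵥ w) - α * (w ⬝ᵥ w) := by
      rw [sub_mulVec]
      simp [dotProduct_sub, smul_mulVec, dotProduct_smul, star_trivial]
    rw [hexp] at this
    linarith [key ▸ this]

lemma aux_block {n K d : ℕ} (ρ : Matrix (Fin K) (Fin d) ℝ) (τ : Fin n → Fin K)
    (γ : ℝ)
    (hblock : ∀ i : Fin K, γ * n ≤ (Finset.univ.filter (fun u => τ u = i)).card)
    (B : Matrix (Fin n) (Fin d) ℝ) (hB : ∀ u j, B u j = ρ (τ u) j) (w : Fin d → ℝ) :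
    γ * n * ((ρ *ᵥ w) ⬝ᵥ (ρ *ᵥ w)) ≤ (B *ᵥ w) ⬝ᵥ (B *ᵥ w) := by
  have hrow : ∀ u, (B *ᵥ w) u = (ρ *ᵥ w) (τ u) := by
    intro u; simp [mulVec, dotProduct, hB]
  calc γ * n * ((ρ *ᵥ w) ⬝ᵥ (ρ *ᵥ w))
      = ∑ i : Fin K, (γ * n) * ((ρ *ᵥ w) i * (ρ *ᵥ w) i) := by
        rw [dotProduct, Finset.mul_sum]
    _ ≤ ∑ i : Fin K, ((Finset.univ.filter (fun u => τ u = i)).card : ℝ)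
          * ((ρ *ᵥ w) i * (ρ *ᵥ w) i) :=
        Finset.sum_le_sum fun i _ =>
          mul_le_mul_of_nonneg_right (hblock i) (mul_self_nonneg _)
    _ = ∑ i : Fin K, ∑ _u ∈ Finset.univ.filter (fun u => τ u = i),
          ((ρ *ᵥ w) i * (ρ *ᵥ w) i) := by
        simp [Finset.sum_const, nsmul_eq_mul]
    _ = ∑ u : Fin n, ((ρ *ᵥ w) (τ u) * (ρ *ᵥ w) (τ u)) :=
        Finset.sum_fiberwise' Finset.univ τ _
    _ = (B *ᵥ w) ⬝ᵥ (B *ᵥ w) := by simp [dotProduct, hrow]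


/-- Singular values of a square real matrix, in decreasing order (index `0` is the
largest): `sval M i = √(λ_{i+1}(M Mᴴ))` where eigenvalues are sorted decreasingly. -/
noncomputable def sval {n : ℕ} (M : Matrix (Fin n) (Fin n) ℝ) : Fin n → ℝ :=
  fun i =>
    Real.sqrt (((Matrix.isHermitian_mul_conjTranspose_self M).eigenvalues ∘
      Tuple.sort (Matrix.isHermitian_mul_conjTranspose_self M).eigenvalues) i.rev)

/-- If all eigenvalues of `νᵀν` and `μᵀμ` exceed `α > 0`, every block of
`τ : [n] → [K]` has size at least `γn`, and `X, Y` have row `u` equal to `ν_{τ(u)}`,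
`μ_{τ(u)}` respectively, then `σ_d(XYᵀ) ≥ αγn`. -/
theorem stmt6 {n K d : ℕ} (hd : 0 < d) (hdn : d ≤ n)
    (ν μ : Matrix (Fin K) (Fin d) ℝ) (α γ : ℝ) (hα : 0 < α) (hγ : 0 < γ)
    (hν : (νᵀ * ν - α • (1 : Matrix (Fin d) (Fin d) ℝ)).PosDef)
    (hμ : (μᵀ * μ - α • (1 : Matrix (Fin d) (Fin d) ℝ)).PosDef)
    (τ : Fin n → Fin K)
    (hblock : ∀ i : Fin K, γ * n ≤ (Finset.univ.filter (fun u => τ u = i)).card)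
    (X Y : Matrix (Fin n) (Fin d) ℝ)
    (hX : ∀ u j, X u j = ν (τ u) j) (hY : ∀ u j, Y u j = μ (τ u) j) :
    α * γ * n ≤ sval (X * Yᵀ) ⟨d - 1, by omega⟩ := by
  have hn : 0 < n := lt_of_lt_of_le hd hdn
  have hn' : (0:ℝ) < n := by exact_mod_cast hn
  set c : ℝ := α * γ * n with hc_def
  have hc : 0 < c := by positivity
  have hγn : (0:ℝ) ≤ γ * n := by positivity
  -- quadratic lower bounds for X and Y
  have hXq : ∀ w : Fin d → ℝ, c * (w ⬝ᵥ w) ≤ (X *ᵥ w) ⬝ᵥ (X *ᵥ w) := by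
    intro w
    have h1 := aux_block ν τ γ hblock X hX w
    have h2 := mul_le_mul_of_nonneg_left (aux_posdef ν α hν w) hγn
    have h3 : c * (w ⬝ᵥ w) = γ * ↑n * (α * (w ⬝ᵥ w)) := by rw [hc_def]; ring
    linarith
  have hYq : ∀ w : Fin d → ℝ, c * (w ⬝ᵥ w) ≤ (Y *ᵥ w) ⬝ᵥ (Y *ᵥ w) := by
    intro w
    have h1 := aux_block μ τ γ hblock Y hY w
    have h2 := mul_le_mul_of_nonneg_left (aux_posdef μ α hμ w) hγn
    have h3 : c * (w ⬝ᵥ w) = γ * ↑n * (α * (w ⬝ᵥ w)) := by rw [hc_def]; ring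
    linarith
  set M : Matrix (Fin n) (Fin n) ℝ := X * Yᵀ with hM
  have hMH : Mᴴ = Y * Xᵀ := by
    ext i j
    simp [hM, conjTranspose_apply, mul_apply, transpose_apply, mul_comm]
  -- main quadratic bound on the range of X
  have hmain : ∀ w : Fin d → ℝ,
      c ^ 2 * ((X *ᵥ w) ⬝ᵥ (X *ᵥ w)) ≤ (Mᴴ *ᵥ (X *ᵥ w)) ⬝ᵥ (Mᴴ *ᵥ (X *ᵥ w)) := by
    intro w
    set v := X *ᵥ w with hv
    set z := Xᵀ *ᵥ v with hz
    have hMt : Mᴴ *ᵥ v = Y *ᵥ z := by rw [hMH, ← mulVec_mulVec]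
    have hwz : w ⬝ᵥ z = v ⬝ᵥ v := by
      rw [hz, dotProduct_mulVec w Xᵀ, vecMul_transpose]
    have h2 : c * (v ⬝ᵥ v) ≤ z ⬝ᵥ z := by
      have := aux_cs w z c hc.le (by rw [hwz]; exact hXq w)
      rwa [hwz] at this
    have h3 := hYq z
    rw [hMt]
    nlinarith
  -- quadratic form of M Mᴴ
  have hq_eq : ∀ v : Fin n → ℝ,
      v ⬝ᵥ ((M * Mᴴ) *ᵥ v) = (Mᴴ *ᵥ v) ⬝ᵥ (Mᴴ *ᵥ v) := by
    intro v
    have hMT : Mᴴ = Mᵀ := by ext i j; simp [conjTranspose_apply]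
    rw [hMT, ← mulVec_mulVec, dotProduct_mulVec v M, mulVec_transpose]
  set hA := isHermitian_mul_conjTranspose_self M with hhA
  set U : Matrix (Fin n) (Fin n) ℝ := (hA.eigenvectorUnitary : Matrix (Fin n) (Fin n) ℝ)
    with hU
  have hUst : star U = Uᵀ := by
    ext i j; simp [Matrix.star_apply]
  have hUU : U * Uᵀ = 1 := by
    rw [← hUst]; exact mem_unitaryGroup_iff.mp hA.eigenvectorUnitary.2
  have hspec := hA.spectral_theorem
  -- at least d eigenvalues are ≥ c^2
  have hT : d ≤ (Finset.univ.filter fun i => c ^ 2 ≤ hA.eigenvalues i).card := by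
    by_contra hcon
    push_neg at hcon
    let ψ : (Fin d → ℝ) →ₗ[ℝ] ({i : Fin n // c ^ 2 ≤ hA.eigenvalues i} → ℝ) :=
      { toFun := fun w i => (star U *ᵥ (X *ᵥ w)) i.1
        map_add' := fun a b => by funext i; simp [mulVec_add]
        map_smul' := fun r a => by funext i; simp [mulVec_smul] }
    have hker : LinearMap.ker ψ ≠ ⊥ := by
      apply LinearMap.ker_ne_bot_of_finrank_lt (K := ℝ)
      rw [Module.finrank_fin_fun, Module.finrank_pi, Fintype.card_subtype]
      exact hcon
    obtain ⟨w, hwker, hw0⟩ := (Submodule.ne_bot_iff _).mp hker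
    have hwker' : ψ w = 0 := LinearMap.mem_ker.mp hwker
    set v := X *ᵥ w with hv
    have hvv : 0 < v ⬝ᵥ v := by
      have h1 := hXq w
      have hww : 0 < w ⬝ᵥ w := by
        rcases lt_or_eq_of_le (Finset.sum_nonneg
          (fun i (_ : i ∈ Finset.univ) => mul_self_nonneg (w i))) with h | h
        · exact h
        · exact absurd (dotProduct_self_eq_zero.mp h.symm) hw0
      nlinarith
    set y := star U *ᵥ v with hy
    have hyT : ∀ i : Fin n, c ^ 2 ≤ hA.eigenvalues i → y i = 0 := by
      intro i hi
      exact congrFun hwker' ⟨i, hi⟩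
    have hvU : v ᵥ* U = y := by rw [hy, hUst, mulVec_transpose]
    have hUy : U *ᵥ y = v := by
      rw [hy, hUst, mulVec_mulVec, hUU, one_mulVec]
    have hyy : y ⬝ᵥ y = v ⬝ᵥ v := by
      calc y ⬝ᵥ y = (v ᵥ* U) ⬝ᵥ y := by rw [hvU]
        _ = v ⬝ᵥ (U *ᵥ y) := (dotProduct_mulVec v U y).symm
        _ = v ⬝ᵥ v := by rw [hUy]
    have hAy : v ⬝ᵥ ((M * Mᴴ) *ᵥ v) = ∑ i, hA.eigenvalues i * (y i) ^ 2 := by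
      conv_lhs => rw [hspec]
      rw [Unitary.conjStarAlgAut_apply, ← hU]
      rw [← mulVec_mulVec, ← mulVec_mulVec, dotProduct_mulVec v U, hvU, ← hy]
      simp only [dotProduct, mulVec_diagonal, Function.comp_apply,
        RCLike.ofReal_real_eq_id, id_eq]
      exact Finset.sum_congr rfl fun i _ => by ring
    have hy0 : y ≠ 0 := by
      intro h
      rw [h] at hyy
      simp [dotProduct] at hyy
      exact absurd hyy.symm (ne_of_gt hvv)
    obtain ⟨i₀, hi₀⟩ := Function.ne_iff.mp hy0
    have hi₀' : y i₀ ≠ 0 := by simpa using hi₀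
    have hlam : hA.eigenvalues i₀ < c ^ 2 := by
      by_contra h
      push_neg at h
      exact hi₀' (hyT i₀ h)
    have hstrict : ∑ i, hA.eigenvalues i * (y i) ^ 2 < ∑ i, c ^ 2 * (y i) ^ 2 := by
      apply Finset.sum_lt_sum
      · intro i _
        rcases le_or_gt (c ^ 2) (hA.eigenvalues i) with h | h
        · rw [hyT i h]; simp
        · exact mul_le_mul_of_nonneg_right h.le (sq_nonneg _)
      · exact ⟨i₀, Finset.mem_univ _,
          mul_lt_mul_of_pos_right hlam (by positivity)⟩
    have hsum : ∑ i, c ^ 2 * (y i) ^ 2 = c ^ 2 * (v ⬝ᵥ v) := by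
      rw [← hyy, dotProduct, Finset.mul_sum]
      exact Finset.sum_congr rfl fun i _ => by ring
    have hlow : c ^ 2 * (v ⬝ᵥ v) ≤ v ⬝ᵥ ((M * Mᴴ) *ᵥ v) := by
      rw [hq_eq]; exact hmain w
    rw [hAy] at hlow
    rw [hsum] at hstrict
    linarith
  -- conclude via the sorted eigenvalues
  show α * γ * ↑n ≤ Real.sqrt ((hA.eigenvalues ∘ Tuple.sort hA.eigenvalues)
    (Fin.rev ⟨d - 1, by omega⟩))
  set σ := Tuple.sort hA.eigenvalues with hσ
  set j : Fin n := Fin.rev ⟨d - 1, by omega⟩ with hj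
  have hjval : (j : ℕ) = n - d := by
    simp [hj, Fin.rev]; omega
  have hmono : Monotone (hA.eigenvalues ∘ σ) := Tuple.monotone_sort hA.eigenvalues
  have hgj : c ^ 2 ≤ (hA.eigenvalues ∘ σ) j := by
    by_contra hlt
    push_neg at hlt
    have hsub : (Finset.univ.filter fun i => c ^ 2 ≤ hA.eigenvalues (σ i))
        ⊆ Finset.Ioi j := by
      intro i hi
      rw [Finset.mem_filter] at hi
      rw [Finset.mem_Ioi]
      by_contra hle
      push_neg at hle
      exact absurd (le_trans hi.2 (hmono hle)) (not_le.mpr hlt)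
    have hcard2 := Finset.card_le_card hsub
    rw [Fin.card_Ioi] at hcard2
    have hperm : (Finset.univ.filter fun i => c ^ 2 ≤ hA.eigenvalues (σ i)).card
        = (Finset.univ.filter fun i => c ^ 2 ≤ hA.eigenvalues i).card := by
      apply Finset.card_equiv σ
      intro i
      simp
    omega
  calc α * γ * ↑n = Real.sqrt (c ^ 2) := by rw [Real.sqrt_sq hc.le]
    _ ≤ _ := Real.sqrt_le_sqrt hgj
end

section
/- Let X, Y ∈ ℝ^{n×d} and let XYᵀ = UΣVᵀ be a rank-d singular value decomposition with U, V ∈ ℝ^{n×d} having orthonormal columns and Σ diagonal with σ₁ ≥ … ≥ σ_d > 0. Suppose λ_d(YᵀY) ≥ αγn, σ₁ ≤ n, and ‖X_u − X_v‖ ≥ β for some pair u, v. Then ‖U_u − U_v‖ ≥ β√(αγ)·n^{−1/2}. -/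
open Matrix

/-- Let `XYᵀ = UΣVᵀ` be a rank-`d` SVD with `U, V` having orthonormal
columns and `Σ = diagonal s` with `s 0 ≥ … ≥ s (d-1) > 0`.  If all eigenvalues of `YᵀY`
are at least `αγn`, all singular values are at most `n`, and rows `u, v` of `X` satisfy
`‖X_u − X_v‖ ≥ β`, then `‖U_u − U_v‖ ≥ β√(αγ)·n^{-1/2}`. -/
theorem stmt16 {n d : ℕ} (hn : 0 < n)
    (X Y U V : Matrix (Fin n) (Fin d) ℝ) (s : Fin d → ℝ)
    (hs : Antitone s) (hspos : ∀ i, 0 < s i) (hsle : ∀ i, s i ≤ n)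
    (hSVD : X * Yᵀ = U * Matrix.diagonal s * Vᵀ)
    (hU : Uᵀ * U = 1) (hV : Vᵀ * V = 1)
    (α γ β : ℝ) (hα : 0 < α) (hγ : 0 < γ) (hβ : 0 < β)
    (hYY : (Yᵀ * Y - (α * γ * n) • (1 : Matrix (Fin d) (Fin d) ℝ)).PosSemidef)
    (u v : Fin n)
    (hXuv : β ≤ Real.sqrt (∑ j, (X u j - X v j) ^ 2)) :
    β * Real.sqrt (α * γ) / Real.sqrt n ≤ Real.sqrt (∑ j, (U u j - U v j) ^ 2) := by
  have hnpos : (0:ℝ) < n := by exact_mod_cast hn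
  set c : ℝ := α * γ * n with hc
  have hcpos : 0 < c := by positivity
  set a : Fin d → ℝ := fun j => X u j - X v j with ha
  set b : Fin d → ℝ := fun j => U u j - U v j with hb
  set w : Fin n → ℝ := fun i => (if i = u then (1:ℝ) else 0) - (if i = v then (1:ℝ) else 0)
    with hw
  have hmv : ∀ (M : Matrix (Fin n) (Fin d) ℝ), Mᵀ *ᵥ w = fun j => M u j - M v j := by
    intro M
    funext j
    simp [mulVec, dotProduct, hw, mul_sub, Finset.sum_sub_distrib, mul_ite, mul_one, mul_zero]
  have hXw : Xᵀ *ᵥ w = a := hmv X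
  have hUw : Uᵀ *ᵥ w = b := hmv U
  -- key identity for dot products
  have key : ∀ (M : Matrix (Fin n) (Fin d) ℝ) (z : Fin d → ℝ),
      z ⬝ᵥ (Mᵀ * M) *ᵥ z = (M *ᵥ z) ⬝ᵥ (M *ᵥ z) := by
    intro M z
    rw [← mulVec_mulVec, dotProduct_mulVec, vecMul_transpose]
  -- step 1 : c * (a ⬝ᵥ a) ≤ ‖Y a‖²
  have h1 : c * (a ⬝ᵥ a) ≤ (Y *ᵥ a) ⬝ᵥ (Y *ᵥ a) := by
    have h0 := hYY.dotProduct_mulVec_nonneg a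
    simp only [star_trivial, sub_mulVec, smul_mulVec, one_mulVec, dotProduct_sub,
      dotProduct_smul, smul_eq_mul] at h0
    rw [key Y a] at h0
    linarith
  -- step 2 : Y a = V (s * b)
  have hfact : Y * Xᵀ = V * Matrix.diagonal s * Uᵀ := by
    have := congrArg Matrix.transpose hSVD
    simpa [Matrix.transpose_mul, Matrix.diagonal_transpose, Matrix.mul_assoc] using this
  have hYa : Y *ᵥ a = V *ᵥ (fun j => s j * b j) := by
    have hdb : Matrix.diagonal s *ᵥ b = fun j => s j * b j := funext (mulVec_diagonal s b)
    rw [← hXw, mulVec_mulVec, hfact, ← mulVec_mulVec, ← mulVec_mulVec, hUw, hdb]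
  -- step 3 : ‖V z‖² = ‖z‖²
  have hVz : ∀ z : Fin d → ℝ, (V *ᵥ z) ⬝ᵥ (V *ᵥ z) = z ⬝ᵥ z := by
    intro z
    rw [← key V z, hV, one_mulVec]
  -- combine: c * (a ⬝ᵥ a) ≤ ∑ (s j * b j)^2 ≤ n^2 * (b ⬝ᵥ b)
  have h2 : c * (a ⬝ᵥ a) ≤ (n:ℝ)^2 * (b ⬝ᵥ b) := by
    have h3 : (fun j => s j * b j) ⬝ᵥ (fun j => s j * b j) ≤ (n:ℝ)^2 * (b ⬝ᵥ b) := by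
      simp only [dotProduct, Finset.mul_sum]
      apply Finset.sum_le_sum
      intro j _
      have h4 : s j ^ 2 ≤ (n:ℝ)^2 := by
        have := hspos j
        have := hsle j
        nlinarith
      nlinarith [sq_nonneg (b j)]
    calc c * (a ⬝ᵥ a) ≤ (Y *ᵥ a) ⬝ᵥ (Y *ᵥ a) := h1
      _ = (fun j => s j * b j) ⬝ᵥ (fun j => s j * b j) := by rw [hYa, hVz]
      _ ≤ (n:ℝ)^2 * (b ⬝ᵥ b) := h3
  -- now turn into the stated inequality
  have haa : a ⬝ᵥ a = ∑ j, (X u j - X v j)^2 := by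
    simp [dotProduct, ha, sq]
  have hbb : b ⬝ᵥ b = ∑ j, (U u j - U v j)^2 := by
    simp [dotProduct, hb, sq]
  have hβ2 : β^2 ≤ a ⬝ᵥ a := by
    rw [haa]
    have hnn : (0:ℝ) ≤ ∑ j, (X u j - X v j)^2 := by positivity
    calc β^2 ≤ Real.sqrt (∑ j, (X u j - X v j)^2) ^ 2 := by
          apply pow_le_pow_left₀ hβ.le hXuv
      _ = ∑ j, (X u j - X v j)^2 := Real.sq_sqrt hnn
  have hfinal : β^2 * (α * γ) / n ≤ ∑ j, (U u j - U v j)^2 := by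
    rw [← hbb]
    rw [div_le_iff₀ hnpos]
    nlinarith [hbb ▸ h2, hβ2, hcpos]
  calc β * Real.sqrt (α * γ) / Real.sqrt n
      = Real.sqrt (β^2 * (α * γ) / n) := by
        rw [Real.sqrt_div (by positivity : (0:ℝ) ≤ β^2*(α*γ)), Real.sqrt_mul (sq_nonneg β), Real.sqrt_sq hβ.le]
      _ ≤ Real.sqrt (∑ j, (U u j - U v j)^2) := Real.sqrt_le_sqrt hfinal
end

section
/- Let W ∈ ℝ^{n×m} have at most K distinct rows, and suppose the rows come in groups: τ : [n] → [K] with W_u = W_v whenever τ(u) = τ(v), and ‖W_u − W_v‖ ≥ 3r whenever τ(u) ≠ τ(v), with every block size |τ^{−1}(i)| > N. Let C ∈ ℝ^{n×m} also have at most K distinct rows, constant on blocks of a partition of [n] into K parts, and suppose ‖C − W‖_F ≤ r√N. Then the number of indices u with ‖C_u − W_u‖ > r is at most N; moreover the balls of radius r around the K distinct rows of W are pairwise disjoint, and each such ball contains exactly one distinct row of C. -/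
/-- `W` has at most `K` distinct rows (constant on blocks of `τ`, with rows
in different blocks at distance `≥ 3r`, and all block sizes `> N`), `C` is constant on
blocks of some partition `σ` into `K` parts with values `ψ`, and `‖C − W‖_F ≤ r√N`.
Then at most `N` rows satisfy `‖C_u − W_u‖ > r`; moreover the radius-`r` balls around the
distinct rows of `W` are pairwise disjoint, and each contains exactly one distinct row
of `C`. -/
theorem stmt17 {n m K N : ℕ} (r : ℝ) (hr : 0 < r)
    (W C : Fin n → EuclideanSpace ℝ (Fin m)) (τ σ : Fin n → Fin K)
    (ψ : Fin K → EuclideanSpace ℝ (Fin m))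
    (hWconst : ∀ u v, τ u = τ v → W u = W v)
    (hWsep : ∀ u v, τ u ≠ τ v → 3 * r ≤ dist (W u) (W v))
    (hblock : ∀ i : Fin K, N < (Finset.univ.filter (fun u => τ u = i)).card)
    (hC : ∀ u, C u = ψ (σ u))
    (hF : Real.sqrt (∑ u, dist (C u) (W u) ^ 2) ≤ r * Real.sqrt N) :
    {u : Fin n | r < dist (C u) (W u)}.ncard ≤ N ∧
    (∀ u v, τ u ≠ τ v →
      Disjoint (Metric.closedBall (W u) r) (Metric.closedBall (W v) r)) ∧
    (∀ u : Fin n, ∃! p : EuclideanSpace ℝ (Fin m),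
      p ∈ Set.range ψ ∧ p ∈ Metric.closedBall (W u) r) := by
  classical
  -- total squared error bound
  set S := ∑ u, dist (C u) (W u) ^ 2 with hSdef
  have hS0 : 0 ≤ S := Finset.sum_nonneg fun u _ => sq_nonneg _
  have hSle : S ≤ r ^ 2 * N := by
    have h1 : Real.sqrt S ^ 2 ≤ (r * Real.sqrt N) ^ 2 :=
      pow_le_pow_left₀ (Real.sqrt_nonneg _) hF 2
    rw [Real.sq_sqrt hS0, mul_pow, Real.sq_sqrt (Nat.cast_nonneg N)] at h1
    exact h1
  -- bad set
  set T := Finset.univ.filter (fun u => r < dist (C u) (W u)) with hTdef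
  have hTcard : T.card ≤ N := by
    by_contra h
    push_neg at h
    have h2 : (T.card : ℝ) * r ^ 2 ≤ ∑ u ∈ T, dist (C u) (W u) ^ 2 := by
      have := Finset.card_nsmul_le_sum T (fun u => dist (C u) (W u) ^ 2) (r ^ 2)
        (fun u hu => by
          have hu' : r < dist (C u) (W u) := by
            simpa [hTdef] using hu
          exact pow_le_pow_left₀ hr.le hu'.le 2)
      simpa [nsmul_eq_mul] using this
    have h3 : ∑ u ∈ T, dist (C u) (W u) ^ 2 ≤ S :=
      Finset.sum_le_sum_of_subset_of_nonneg (Finset.subset_univ T)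
        (fun u _ _ => sq_nonneg _)
    have h4 : (N : ℝ) + 1 ≤ (T.card : ℝ) := by exact_mod_cast h
    nlinarith [sq_nonneg r]
  -- disjointness of balls
  have hdisj : ∀ u v, τ u ≠ τ v →
      Disjoint (Metric.closedBall (W u) r) (Metric.closedBall (W v) r) := by
    intro u v huv
    rw [Set.disjoint_left]
    intro x hx hy
    have h1 : dist x (W u) ≤ r := Metric.mem_closedBall.mp hx
    have h2 : dist x (W v) ≤ r := Metric.mem_closedBall.mp hy
    have h3 := hWsep u v huv
    have := dist_triangle (W u) x (W v)
    rw [dist_comm (W u) x] at this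
    linarith
  -- in each block there is a good row
  have hgood : ∀ i : Fin K, ∃ v : Fin n, τ v = i ∧ dist (C v) (W v) ≤ r := by
    intro i
    by_contra h
    push_neg at h
    have hsub : (Finset.univ.filter (fun u => τ u = i)) ⊆ T := by
      intro u hu
      simp only [Finset.mem_filter, Finset.mem_univ, true_and] at hu
      simp [hTdef, h u hu]
    have := Finset.card_le_card hsub
    have := hblock i
    omega
  choose v hv1 hv2 using hgood
  -- q i : distinct row of C near block i
  set q : Fin K → EuclideanSpace ℝ (Fin m) := fun i => ψ (σ (v i)) with hqdef
  have hqC : ∀ i, q i = C (v i) := fun i => (hC (v i)).symm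
  have hqball : ∀ i, q i ∈ Metric.closedBall (W (v i)) r := by
    intro i
    rw [hqC i]
    exact Metric.mem_closedBall.mpr (hv2 i)
  have hginj : Function.Injective (fun i => σ (v i)) := by
    intro i j hij
    by_contra hne
    have hτ : τ (v i) ≠ τ (v j) := by rw [hv1 i, hv1 j]; exact hne
    have hd := hdisj (v i) (v j) hτ
    have hij' : σ (v i) = σ (v j) := hij
    have hq2 : q i ∈ Metric.closedBall (W (v j)) r := by
      show ψ (σ (v i)) ∈ _
      rw [hij']
      exact hqball j
    exact (Set.disjoint_left.mp hd (hqball i)) hq2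
  have hgsurj : Function.Surjective (fun i => σ (v i)) :=
    Finite.surjective_of_injective hginj
  -- each ψ j equals some q i
  have hψq : ∀ j : Fin K, ∃ i, ψ j = q i := by
    intro j
    obtain ⟨i, hi⟩ := hgsurj j
    have hi' : σ (v i) = j := hi
    exact ⟨i, by show ψ j = ψ (σ (v i)); rw [hi']⟩
  refine ⟨?_, hdisj, ?_⟩
  · have hset : {u : Fin n | r < dist (C u) (W u)}.ncard = T.card := by
      rw [Set.ncard_eq_toFinset_card']
      congr 1
      ext u
      simp [hTdef]
    rw [hset]; exact hTcard
  · intro u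
    refine ⟨q (τ u), ⟨⟨σ (v (τ u)), rfl⟩, ?_⟩, ?_⟩
    · have hW : W (v (τ u)) = W u := hWconst _ _ (by rw [hv1])
      have := hqball (τ u)
      rwa [hW] at this
    · rintro p ⟨⟨j, rfl⟩, hp⟩
      obtain ⟨i, hi⟩ := hψq j
      rw [hi] at hp ⊢
      by_contra hne
      have hτ : τ (v i) ≠ τ u := by
        intro h
        apply hne
        have hiu : i = τ u := by rw [← hv1 i, h]
        rw [hiu]
      have hd := hdisj (v i) u hτ
      exact (Set.disjoint_left.mp hd (hqball i)) hp
end
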